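/- For every x ∈ [-ε, ε] the integral ∫_{-ε}^{ε} log|x−y| / √(ε²−y²) dy = π·log(ε/2); in particular this value is independent of x. -/

import Mathlib

open Real Set MeasureTheory intervalIntegral
open scoped Interval

lemma il_log_right {b : ℝ} (hb : 0 ≤ b) : IntervalIntegrable Real.log volume 0 b := by
  have hmaj : IntervalIntegrable (fun x : ℝ => 2 * x ^ (-(1/2) : ℝ) + x) volume 0 b :=
    ((intervalIntegrable_rpow' (by norm_num)).const_mul 2).add
      (continuous_id.intervalIntegrable 0 b)
  refine hmaj.mono_fun Real.measurable_log.aestronglyMeasurable ?_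
  filter_upwards [ae_restrict_mem measurableSet_Ioc] with x hx
  rw [uIoc_of_le hb] at hx
  obtain ⟨hx0, hxb⟩ := hx
  have hsq : 0 < Real.sqrt x := Real.sqrt_pos.2 hx0
  have hrpow : x ^ (-(1/2) : ℝ) = 1 / Real.sqrt x := by
    rw [Real.rpow_neg hx0.le, Real.sqrt_eq_rpow, one_div]
    norm_num
  have hb1 : (0:ℝ) ≤ 2 * x ^ (-(1/2) : ℝ) + x := by
    rw [hrpow]; positivity
  rw [Real.norm_eq_abs, Real.norm_eq_abs, abs_of_nonneg hb1, abs_le]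
  constructor
  · -- -(2x^{-1/2}+x) ≤ log x, i.e. -log x ≤ 2x^{-1/2}+x
    have h1 : Real.log (1/x) ≤ 1/x - 1 := Real.log_le_sub_one_of_pos (by positivity)
    have h2 : -Real.log x = 2 * Real.log (1 / Real.sqrt x) := by
      rw [Real.log_div one_ne_zero hsq.ne', Real.log_one, Real.log_sqrt hx0.le]; ring
    have h3 : Real.log (1 / Real.sqrt x) ≤ 1 / Real.sqrt x - 1 :=
      Real.log_le_sub_one_of_pos (by positivity)
    nlinarith [hsq, hx0.le, Real.sq_sqrt hx0.le, hrpow]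
  · -- log x ≤ 2x^{-1/2}+x
    have := Real.log_le_sub_one_of_pos hx0
    have hlx : Real.log x ≤ x := by linarith
    rw [hrpow]
    have : (0:ℝ) ≤ 2 * (1/Real.sqrt x) := by positivity
    linarith

lemma il_log_all (a b : ℝ) : IntervalIntegrable Real.log volume a b := by
  have key : ∀ c : ℝ, IntervalIntegrable Real.log volume 0 c := by
    intro c
    rcases le_or_gt 0 c with hc | hc
    · exact il_log_right hc
    · have h := (il_log_right (by linarith : (0:ℝ) ≤ -c)).comp_mul_left (c := -1)
      simp only [neg_one_mul] at h
      have : (fun x : ℝ => Real.log (-x)) = Real.log := by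
        funext x; rw [Real.log_neg_eq_log]
      rw [this] at h

      norm_num at h
      exact intervalIntegrable_log'
  exact (key a).symm.trans (key b)

noncomputable def L (t : ℝ) : ℝ := Real.log (Real.sin t)

lemma L_neg (t : ℝ) : L (-t) = L t := by
  simp only [L, Real.sin_neg, Real.log_neg_eq_log]

lemma L_pi_sub (t : ℝ) : L (π - t) = L t := by
  simp only [L, Real.sin_pi_sub]

lemma L_periodic : Function.Periodic L π := by
  intro t
  simp only [L, Real.sin_add_pi, Real.log_neg_eq_log]

lemma il_L_mid {a b : ℝ} (ha : a ∈ Icc (-(π/2)) (π/2)) (hb : b ∈ Icc (-(π/2)) (π/2)) :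
    IntervalIntegrable L volume a b := by
  have hmaj : IntervalIntegrable (fun t : ℝ => Real.log (π/2) - Real.log t) volume a b :=
    (intervalIntegrable_const.sub (il_log_all a b))
  refine hmaj.mono_fun ?_ ?_
  · exact (Real.measurable_log.comp Real.measurable_sin).aestronglyMeasurable
  · have h0 : ∀ᵐ t : ℝ ∂(volume.restrict (Ι a b)), t ≠ 0 := by
      refine ae_restrict_of_ae ?_
      simp [ae_iff, measure_singleton]
    filter_upwards [ae_restrict_mem measurableSet_uIoc, h0] with t ht ht0
    have htabs : |t| ≤ π / 2 := by
      rw [abs_le]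
      rcases mem_uIoc.mp ht with h | h <;>
        constructor <;> nlinarith [ha.1, ha.2, hb.1, hb.2, h.1, h.2, h.1.le]
    have htpos : 0 < |t| := abs_pos.2 ht0
    have hsin : 2 / π * |t| ≤ |Real.sin t| := by
      have := Real.mul_le_sin (abs_nonneg t) htabs
      rcases le_or_gt 0 t with h | h
      · rwa [abs_of_nonneg h, abs_of_nonneg (Real.sin_nonneg_of_nonneg_of_le_pi h
          (by nlinarith [Real.pi_pos, le_abs_self t]))] at *
      · rw [abs_of_neg h] at this ⊢
        rw [abs_of_nonpos (Real.sin_nonpos_of_nonpos_of_neg_pi_le h.le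
          (by nlinarith [Real.pi_pos, neg_abs_le t]))]
        rwa [Real.sin_neg] at this
    have hsinpos : 0 < |Real.sin t| := lt_of_lt_of_le (by positivity) hsin
    have hLt : L t = Real.log |Real.sin t| := by rw [L, Real.log_abs]
    have hsin1 : |Real.sin t| ≤ 1 := Real.abs_sin_le_one t
    have hlogle : Real.log |Real.sin t| ≤ 0 := Real.log_nonpos (abs_nonneg _) hsin1
    have hlogge : Real.log (2 / π * |t|) ≤ Real.log |Real.sin t| :=
      Real.log_le_log (by positivity) hsin
    have hexp : Real.log (2 / π * |t|) = -(Real.log (π/2) - Real.log |t|) := by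
      rw [show (2:ℝ)/π * |t| = |t| / (π/2) by field_simp, Real.log_div htpos.ne' (by positivity)]
      ring
    have hrhs : 0 ≤ Real.log (π/2) - Real.log |t| := by
      rw [← Real.log_div (by positivity) htpos.ne']
      apply Real.log_nonneg
      rw [le_div_iff₀ htpos]; linarith
    rw [Real.norm_eq_abs, Real.norm_eq_abs, hLt,
      show Real.log t = Real.log |t| from (Real.log_abs t).symm,
      abs_of_nonpos hlogle, abs_of_nonneg hrhs]
    linarith [hexp ▸ hlogge]

lemma il_L_hi : IntervalIntegrable L volume (π/2) π := by
  have h := (il_L_mid (a := 0) (b := π/2)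
    ⟨by linarith [Real.pi_pos], by linarith [Real.pi_pos]⟩
    ⟨by linarith [Real.pi_pos], le_refl _⟩).comp_sub_left π
  have heq : (fun x => L (π - x)) = L := funext L_pi_sub
  rw [heq] at h
  have : π - π/2 = π/2 := by ring
  rw [this] at h
  simpa using h.symm

lemma il_L {a b : ℝ} (ha : a ∈ Icc (-(π/2)) π) (hb : b ∈ Icc (-(π/2)) π) :
    IntervalIntegrable L volume a b := by
  have hbig : IntervalIntegrable L volume (-(π/2)) π :=
    (il_L_mid ⟨le_refl _, by linarith [Real.pi_pos]⟩
      ⟨by linarith [Real.pi_pos], le_refl _⟩).trans il_L_hi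
  exact hbig.mono_set (by
    rw [uIcc_of_le (by linarith [Real.pi_pos, ha.1, ha.2, hb.1, hb.2] : -(π/2) ≤ π)]
    exact uIcc_subset_Icc ha hb)

lemma integral_L_pi : ∫ t in (0)..π, L t = -π * Real.log 2 := by
  have hpi := Real.pi_pos
  have h02 : (0:ℝ) ∈ Icc (-(π/2)) π := ⟨by linarith, by linarith⟩
  have hh2 : π/2 ∈ Icc (-(π/2)) π := ⟨by linarith, by linarith⟩
  have hp2 : π ∈ Icc (-(π/2)) π := ⟨by linarith, le_refl _⟩
  set J := ∫ t in (0)..(π/2), L t with hJ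
  -- second half equals first half
  have hhalf : ∫ t in (π/2)..π, L t = J := by
    have := intervalIntegral.integral_comp_sub_left (a := 0) (b := π/2) L π
    simp only [L_pi_sub, sub_zero] at this
    rw [show π - π/2 = π/2 by ring] at this
    rw [← this]
  have hsplit : ∫ t in (0)..π, L t = 2 * J := by
    rw [← intervalIntegral.integral_add_adjacent_intervals (il_L h02 hh2) (il_L hh2 hp2),
      hhalf]
    ring
  -- doubling substitution
  have hdouble : ∫ t in (0)..(π/2), L (2 * t) = 2⁻¹ * ∫ t in (0)..π, L t := by
    have := intervalIntegral.integral_comp_mul_left (a := 0) (b := π/2) L (two_ne_zero)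
    simp only [mul_zero] at this
    rw [show 2 * (π/2) = π by ring] at this
    rw [this, smul_eq_mul]
  -- pointwise identity a.e.
  have hcoseq : ∫ t in (0)..(π/2), Real.log (Real.cos t) = J := by
    have := intervalIntegral.integral_comp_sub_left (a := 0) (b := π/2) L (π/2)
    simp only [sub_zero] at this
    have heq : ∀ x, L (π/2 - x) = Real.log (Real.cos x) := by
      intro x; rw [L, Real.sin_pi_div_two_sub]
    simp only [heq] at this
    rw [this, show π/2 - π/2 = 0 by ring]
  have hilcos : IntervalIntegrable (fun t => Real.log (Real.cos t)) volume 0 (π/2) := by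
    have h := (il_L h02 hh2).comp_sub_left (π/2)
    have heq : (fun x => L (π/2 - x)) = fun t => Real.log (Real.cos t) := by
      funext x; rw [L, Real.sin_pi_div_two_sub]
    rw [heq] at h
    have e1 : π/2 - 0 = π/2 := by ring
    have e2 : π/2 - π/2 = 0 := by ring
    rw [e1, e2] at h
    exact h.symm
  have hae : ∀ᵐ t : ℝ, t ∈ Ι (0:ℝ) (π/2) →
      L (2 * t) = Real.log 2 + L t + Real.log (Real.cos t) := by
    have h0 : ∀ᵐ t : ℝ, t ≠ π/2 := by simp [ae_iff, measure_singleton]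
    filter_upwards [h0] with t ht2 ht
    rw [uIoc_of_le (by linarith)] at ht
    have ht0 : 0 < t := ht.1
    have htlt : t < π/2 := lt_of_le_of_ne ht.2 ht2
    have hsin : 0 < Real.sin t := Real.sin_pos_of_pos_of_lt_pi ht0 (by linarith)
    have hcos : 0 < Real.cos t := Real.cos_pos_of_mem_Ioo ⟨by linarith, htlt⟩
    rw [L, L, Real.sin_two_mul, Real.log_mul (by positivity) hcos.ne',
      Real.log_mul two_ne_zero hsin.ne']
  have hsum : ∫ t in (0)..(π/2), L (2 * t)
      = (π/2) * Real.log 2 + J + J := by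
    rw [intervalIntegral.integral_congr_ae hae,
      intervalIntegral.integral_add (intervalIntegrable_const.add (il_L h02 hh2)) hilcos,
      intervalIntegral.integral_add intervalIntegrable_const (il_L h02 hh2),
      intervalIntegral.integral_const, hcoseq]
    simp only [smul_eq_mul, sub_zero]
    linarith [hJ]
  rw [hdouble] at hsum
  rw [hsplit] at hsum ⊢
  linarith

lemma integral_L_shift (a : ℝ) : ∫ t in a..(a + π), L t = -π * Real.log 2 := by
  have := L_periodic.intervalIntegral_add_eq a 0
  rw [this, zero_add, integral_L_pi]

lemma integral_log_cos_sub_cos {φ : ℝ} (hφ : φ ∈ Icc 0 π) :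
    ∫ θ in (0)..π, Real.log |Real.cos φ - Real.cos θ| = -π * Real.log 2 := by
  have hpi := Real.pi_pos
  -- the two composed functions and their integrability
  have hA : IntervalIntegrable (fun θ => L ((θ + φ)/2)) volume 0 π := by
    have h0 : IntervalIntegrable L volume (φ/2) ((π + φ)/2) :=
      il_L ⟨by linarith [hφ.1], by linarith [hφ.2]⟩
        ⟨by linarith [hφ.1], by linarith [hφ.2]⟩
    have h1 := (h0.comp_mul_left (c := 1/2)).comp_add_right φ
    have e : (fun x => L (1/2 * (x + φ))) = fun θ => L ((θ + φ)/2) := by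
      funext x; congr 1; ring
    rw [e] at h1
    have e1 : φ/2 / (1/2) - φ = 0 := by ring
    have e2 : (π + φ)/2 / (1/2) - φ = π := by ring
    rwa [e1, e2] at h1
  have hB : IntervalIntegrable (fun θ => L ((θ - φ)/2)) volume 0 π := by
    have h0 : IntervalIntegrable L volume (-φ/2) ((π - φ)/2) :=
      il_L ⟨by linarith [hφ.1, hφ.2], by linarith [hφ.1, hφ.2]⟩
        ⟨by linarith [hφ.1, hφ.2], by linarith [hφ.1, hφ.2]⟩
    have h1 := (h0.comp_mul_left (c := 1/2)).comp_add_right (-φ)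
    have e : (fun x => L (1/2 * (x + -φ))) = fun θ => L ((θ - φ)/2) := by
      funext x; congr 1; ring
    rw [e] at h1
    have e1 : -φ/2 / (1/2) - -φ = 0 := by ring
    have e2 : (π - φ)/2 / (1/2) - -φ = π := by ring
    rwa [e1, e2] at h1
  -- a.e. pointwise identity
  have hae : ∀ᵐ θ : ℝ, θ ∈ Ι (0:ℝ) π →
      Real.log |Real.cos φ - Real.cos θ|
        = Real.log 2 + L ((θ + φ)/2) + L ((θ - φ)/2) := by
    have h0 : ∀ᵐ θ : ℝ, θ ≠ φ := by simp [ae_iff, measure_singleton]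
    filter_upwards [h0] with θ hθφ hθ
    rw [uIoc_of_le hpi.le] at hθ
    obtain ⟨hθ0, hθπ⟩ := hθ
    have hs1 : 0 < Real.sin ((φ + θ)/2) := by
      apply Real.sin_pos_of_pos_of_lt_pi
      · linarith [hφ.1]
      · rcases lt_or_ge θ π with h | h
        · linarith [hφ.2]
        · have hθπ' : θ = π := le_antisymm hθπ h
          have : φ < π := lt_of_le_of_ne hφ.2 (fun h' => hθφ (by rw [hθπ', h']))
          linarith
    have hs2 : Real.sin ((φ - θ)/2) ≠ 0 := by
      intro h
      have habs : |(φ - θ)/2| < π := by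
        rw [abs_lt]; constructor <;> linarith [hφ.1, hφ.2]
      have := (Real.sin_eq_zero_iff_of_lt_of_lt (abs_lt.mp habs).1 (abs_lt.mp habs).2).mp h
      exact hθφ (by linarith)
    have hid : Real.cos φ - Real.cos θ = -2 * Real.sin ((φ + θ)/2) * Real.sin ((φ - θ)/2) :=
      Real.cos_sub_cos φ θ
    rw [Real.log_abs, hid]
    have h2 : -2 * Real.sin ((φ + θ)/2) * Real.sin ((φ - θ)/2)
        = -(2 * Real.sin ((φ + θ)/2) * Real.sin ((φ - θ)/2)) := by ring
    rw [h2, Real.log_neg_eq_log, Real.log_mul (by positivity) hs2,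
      Real.log_mul two_ne_zero hs1.ne']
    have e1 : (φ + θ)/2 = (θ + φ)/2 := by ring
    have e2 : L ((θ - φ)/2) = Real.log (Real.sin ((φ - θ)/2)) := by
      rw [L, show (θ - φ)/2 = -((φ - θ)/2) by ring, Real.sin_neg, Real.log_neg_eq_log]
    rw [e1, e2, L]
  -- compute ∫ A
  have hIA : ∫ θ in (0)..π, L ((θ + φ)/2) = 2 * ∫ u in (φ/2)..((π + φ)/2), L u := by
    have h1 := intervalIntegral.integral_comp_add_right (a := 0) (b := π) (fun u => L (u/2)) φ
    have h2 := intervalIntegral.integral_comp_div (a := 0 + φ) (b := π + φ) L two_ne_zero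
    simp only [zero_add] at h1 h2
    calc ∫ θ in (0)..π, L ((θ + φ)/2) = ∫ u in φ..(π + φ), L (u/2) := h1
      _ = 2 * ∫ u in (φ/2)..((π + φ)/2), L u := by rw [h2]; simp [smul_eq_mul]
  have hIB : ∫ θ in (0)..π, L ((θ - φ)/2) = 2 * ∫ u in ((φ - π)/2)..(φ/2), L u := by
    have h1 := intervalIntegral.integral_comp_add_right (a := 0) (b := π) (fun u => L (u/2)) (-φ)
    simp only [zero_add, zero_sub, ← sub_eq_add_neg] at h1
    have h2 := intervalIntegral.integral_comp_div (a := -φ) (b := π - φ) L two_ne_zero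
    have h3 := intervalIntegral.integral_comp_neg (a := -(φ/2)) (b := (π - φ)/2) L
    have hLneg : (fun x => L (-x)) = L := funext L_neg
    rw [hLneg] at h3
    calc ∫ θ in (0)..π, L ((θ - φ)/2) = ∫ u in (-φ)..(π - φ), L (u/2) := h1
      _ = 2 * ∫ u in (-φ/2)..((π - φ)/2), L u := by rw [h2]; simp [smul_eq_mul]
      _ = 2 * ∫ u in ((φ - π)/2)..(φ/2), L u := by
          rw [show -φ/2 = -(φ/2) by ring, h3]
          congr 2 <;> ring
  -- combine
  rw [intervalIntegral.integral_congr_ae hae,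
    intervalIntegral.integral_add ((_root_.intervalIntegrable_const).add hA) hB,
    intervalIntegral.integral_add (_root_.intervalIntegrable_const) hA,
    intervalIntegral.integral_const, hIA, hIB]
  have hadj : (∫ u in ((φ - π)/2)..(φ/2), L u) + ∫ u in (φ/2)..((π + φ)/2), L u
      = -π * Real.log 2 := by
    rw [intervalIntegral.integral_add_adjacent_intervals
      (il_L ⟨by linarith [hφ.1, hφ.2], by linarith [hφ.1, hφ.2]⟩
        ⟨by linarith [hφ.1, hφ.2], by linarith [hφ.1, hφ.2]⟩)
      (il_L ⟨by linarith [hφ.1, hφ.2], by linarith [hφ.1, hφ.2]⟩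
        ⟨by linarith [hφ.1, hφ.2], by linarith [hφ.1, hφ.2]⟩)]
    have := integral_L_shift ((φ - π)/2)
    rw [show (φ - π)/2 + π = (π + φ)/2 by ring] at this
    exact this
  simp only [smul_eq_mul, sub_zero]
  linarith [hadj]

lemma il_log_cos_sub_cos {φ : ℝ} (hφ : φ ∈ Icc 0 π) :
    IntervalIntegrable (fun θ => Real.log |Real.cos φ - Real.cos θ|) volume 0 π := by
  have hpi := Real.pi_pos
  have hA : IntervalIntegrable (fun θ => L ((θ + φ)/2)) volume 0 π := by
    have h0 : IntervalIntegrable L volume (φ/2) ((π + φ)/2) :=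
      il_L ⟨by linarith [hφ.1], by linarith [hφ.2]⟩
        ⟨by linarith [hφ.1], by linarith [hφ.2]⟩
    have h1 := (h0.comp_mul_left (c := 1/2)).comp_add_right φ
    have e : (fun x => L (1/2 * (x + φ))) = fun θ => L ((θ + φ)/2) := by
      funext x; congr 1; ring
    rw [e] at h1
    have e1 : φ/2 / (1/2) - φ = 0 := by ring
    have e2 : (π + φ)/2 / (1/2) - φ = π := by ring
    rwa [e1, e2] at h1
  have hB : IntervalIntegrable (fun θ => L ((θ - φ)/2)) volume 0 π := by
    have h0 : IntervalIntegrable L volume (-φ/2) ((π - φ)/2) :=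
      il_L ⟨by linarith [hφ.1, hφ.2], by linarith [hφ.1, hφ.2]⟩
        ⟨by linarith [hφ.1, hφ.2], by linarith [hφ.1, hφ.2]⟩
    have h1 := (h0.comp_mul_left (c := 1/2)).comp_add_right (-φ)
    have e : (fun x => L (1/2 * (x + -φ))) = fun θ => L ((θ - φ)/2) := by
      funext x; congr 1; ring
    rw [e] at h1
    have e1 : -φ/2 / (1/2) - -φ = 0 := by ring
    have e2 : (π - φ)/2 / (1/2) - -φ = π := by ring
    rwa [e1, e2] at h1
  have hae : ∀ᵐ θ : ℝ, θ ∈ Ι (0:ℝ) π →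
      Real.log 2 + L ((θ + φ)/2) + L ((θ - φ)/2)
        = Real.log |Real.cos φ - Real.cos θ| := by
    have h0 : ∀ᵐ θ : ℝ, θ ≠ φ := by simp [ae_iff, measure_singleton]
    filter_upwards [h0] with θ hθφ hθ
    rw [uIoc_of_le hpi.le] at hθ
    obtain ⟨hθ0, hθπ⟩ := hθ
    have hs1 : 0 < Real.sin ((φ + θ)/2) := by
      apply Real.sin_pos_of_pos_of_lt_pi
      · linarith [hφ.1]
      · rcases lt_or_ge θ π with h | h
        · linarith [hφ.2]
        · have hθπ' : θ = π := le_antisymm hθπ h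
          have : φ < π := lt_of_le_of_ne hφ.2 (fun h' => hθφ (by rw [hθπ', h']))
          linarith
    have hs2 : Real.sin ((φ - θ)/2) ≠ 0 := by
      intro h
      have habs : |(φ - θ)/2| < π := by
        rw [abs_lt]; constructor <;> linarith [hφ.1, hφ.2]
      have := (Real.sin_eq_zero_iff_of_lt_of_lt (abs_lt.mp habs).1 (abs_lt.mp habs).2).mp h
      exact hθφ (by linarith)
    have hid : Real.cos φ - Real.cos θ = -2 * Real.sin ((φ + θ)/2) * Real.sin ((φ - θ)/2) :=
      Real.cos_sub_cos φ θ
    rw [Real.log_abs, hid]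
    have h2 : -2 * Real.sin ((φ + θ)/2) * Real.sin ((φ - θ)/2)
        = -(2 * Real.sin ((φ + θ)/2) * Real.sin ((φ - θ)/2)) := by ring
    rw [h2, Real.log_neg_eq_log, Real.log_mul (by positivity) hs2,
      Real.log_mul two_ne_zero hs1.ne']
    have e1 : (φ + θ)/2 = (θ + φ)/2 := by ring
    have e2 : L ((θ - φ)/2) = Real.log (Real.sin ((φ - θ)/2)) := by
      rw [L, show (θ - φ)/2 = -((φ - θ)/2) by ring, Real.sin_neg, Real.log_neg_eq_log]
    rw [e1, e2, L]
  exact ((_root_.intervalIntegrable_const.add hA).add hB).congr_ae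
    ((MeasureTheory.ae_restrict_iff' measurableSet_uIoc).mpr hae)

theorem stmt_1 (ε x : ℝ) (hε : 0 < ε) (hx : x ∈ Icc (-ε) ε) :
    ∫ y in Ioo (-ε) ε, Real.log |x - y| / Real.sqrt (ε ^ 2 - y ^ 2)
      = π * Real.log (ε / 2) := by
  have hpi := Real.pi_pos
  set F : ℝ → ℝ := fun y => Real.log |x - y| / Real.sqrt (ε ^ 2 - y ^ 2) with hF
  -- the image of (0, π) under ε cos
  have himg : (fun θ => ε * Real.cos θ) '' Ioo 0 π = Ioo (-ε) ε := by
    apply Subset.antisymm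
    · rintro _ ⟨θ, hθ, rfl⟩
      have h1 : Real.cos θ < 1 := by
        have := Real.strictAntiOn_cos ⟨le_refl 0, hpi.le⟩ ⟨hθ.1.le, hθ.2.le⟩ hθ.1
        simpa using this
      have h2 : -1 < Real.cos θ := by
        have := Real.strictAntiOn_cos ⟨hθ.1.le, hθ.2.le⟩ ⟨hpi.le, le_refl π⟩ hθ.2
        simpa using this
      simp only [mem_Ioo]
      constructor <;> nlinarith
    · rintro y hy
      have hyd : -1 < y/ε ∧ y/ε < 1 := by
        constructor
        · rw [lt_div_iff₀ hε]; linarith [hy.1]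
        · rw [div_lt_one hε]; exact hy.2
      refine ⟨Real.arccos (y/ε), ⟨Real.arccos_pos.mpr hyd.2, ?_⟩, ?_⟩
      · refine lt_of_le_of_ne (Real.arccos_le_pi _) (fun h => ?_)
        have := Real.arccos_eq_pi.mp h
        have : y ≤ -ε := by
          rw [div_le_iff₀ hε] at this; linarith
        linarith [hy.1]
      · show ε * Real.cos (Real.arccos (y/ε)) = y
        rw [Real.cos_arccos hyd.1.le hyd.2.le]
        field_simp
  -- change of variables
  have hderiv : ∀ θ ∈ Ioo (0:ℝ) π, HasDerivWithinAt (fun θ => ε * Real.cos θ)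
      (ε * -Real.sin θ) (Ioo 0 π) θ :=
    fun θ _ => ((Real.hasDerivAt_cos θ).const_mul ε).hasDerivWithinAt
  have hinj : InjOn (fun θ => ε * Real.cos θ) (Ioo 0 π) := by
    intro a ha b hb h
    exact Real.injOn_cos ⟨ha.1.le, ha.2.le⟩ ⟨hb.1.le, hb.2.le⟩
      (mul_left_cancel₀ hε.ne' h)
  have hcv := MeasureTheory.integral_image_eq_integral_abs_deriv_smul
    measurableSet_Ioo hderiv hinj F
  rw [himg] at hcv
  rw [hcv]
  -- simplify the integrand on (0, π)
  have hsimp : ∫ θ in Ioo 0 π, |ε * -Real.sin θ| • F (ε * Real.cos θ)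
      = ∫ θ in Ioo 0 π, Real.log |x - ε * Real.cos θ| := by
    refine MeasureTheory.setIntegral_congr_fun measurableSet_Ioo (fun θ hθ => ?_)
    have hsin : 0 < Real.sin θ := Real.sin_pos_of_pos_of_lt_pi hθ.1 hθ.2
    have habs : |ε * -Real.sin θ| = ε * Real.sin θ := by
      rw [abs_mul, abs_of_pos hε, abs_neg, abs_of_pos hsin]
    have hsq : ε ^ 2 - (ε * Real.cos θ) ^ 2 = (ε * Real.sin θ) ^ 2 := by
      have := Real.sin_sq_add_cos_sq θ
      nlinarith
    have hsqrt : Real.sqrt (ε ^ 2 - (ε * Real.cos θ) ^ 2) = ε * Real.sin θ := by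
      rw [hsq, Real.sqrt_sq (by positivity)]
    have hne : ε * Real.sin θ ≠ 0 := by positivity
    simp only [hF, habs, smul_eq_mul, hsqrt]
    field_simp
  rw [hsimp]
  -- convert to an interval integral
  rw [show ∫ θ in Ioo 0 π, Real.log |x - ε * Real.cos θ|
      = ∫ θ in (0)..π, Real.log |x - ε * Real.cos θ| by
    rw [intervalIntegral.integral_of_le hpi.le, MeasureTheory.integral_Ioc_eq_integral_Ioo] ]
  -- write x = ε cos φ
  set φ := Real.arccos (x/ε) with hφdef
  have hφ : φ ∈ Icc 0 π := ⟨Real.arccos_nonneg _, Real.arccos_le_pi _⟩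
  have hxd : -1 ≤ x/ε ∧ x/ε ≤ 1 := by
    constructor
    · rw [le_div_iff₀ hε]; linarith [hx.1]
    · rw [div_le_one hε]; exact hx.2
  have hcosφ : ε * Real.cos φ = x := by
    rw [hφdef, Real.cos_arccos hxd.1 hxd.2]; field_simp
  have hae : ∀ᵐ θ : ℝ, θ ∈ Ι (0:ℝ) π →
      Real.log |x - ε * Real.cos θ|
        = Real.log ε + Real.log |Real.cos φ - Real.cos θ| := by
    have h0 : ∀ᵐ θ : ℝ, θ ≠ φ := by simp [ae_iff, measure_singleton]
    filter_upwards [h0] with θ hθφ hθ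
    rw [uIoc_of_le hpi.le] at hθ
    have hcosne : Real.cos φ - Real.cos θ ≠ 0 := by
      intro h
      exact hθφ ((Real.injOn_cos hφ ⟨hθ.1.le, hθ.2⟩ (sub_eq_zero.mp h)).symm)
    have he : x - ε * Real.cos θ = ε * (Real.cos φ - Real.cos θ) := by
      rw [← hcosφ]; ring
    rw [he, abs_mul, abs_of_pos hε,
      Real.log_mul hε.ne' (abs_ne_zero.mpr hcosne)]
  rw [intervalIntegral.integral_congr_ae hae,
    intervalIntegral.integral_add _root_.intervalIntegrable_const (il_log_cos_sub_cos hφ),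
    intervalIntegral.integral_const, integral_log_cos_sub_cos hφ]
  simp only [smul_eq_mul, sub_zero]
  rw [Real.log_div hε.ne' two_ne_zero]
  ring
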